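/- Let n ≥ k ≥ j be positive integers. In an n-dimensional vector space over the field with 2 elements, the number of k-dimensional subspaces containing a fixed j-dimensional subspace equals the 2-ary Gaussian binomial coefficient [n−j choose k−j]_2 = ∏_{i=0}^{k−j−1} (2^{n−j−i} − 1)/(2^{k−j−i} − 1). -/

import Mathlib

open Module Submodule Set

set_option synthInstance.maxHeartbeats 1000000
set_option maxHeartbeats 2000000

namespace Stmt10Aux

variable {M : Type*} [AddCommGroup M] [Module (ZMod 2) M] [FiniteDimensional (ZMod 2) M]

lemma card_module : Nat.card M = 2 ^ finrank (ZMod 2) M := by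
  haveI : Finite M := Module.finite_of_finite (ZMod 2)
  haveI : Fintype M := Fintype.ofFinite M
  rw [Nat.card_eq_fintype_card, card_eq_pow_finrank (K := ZMod 2), ZMod.card]

lemma card_linIndep (m : ℕ) :
    Nat.card {f : Fin m → M // LinearIndependent (ZMod 2) f} =
      ∏ i ∈ Finset.range m, (2 ^ finrank (ZMod 2) M - 2 ^ i) := by
  haveI : Finite M := Module.finite_of_finite (ZMod 2)
  induction m with
  | zero =>
    rw [Nat.card_congr (Equiv.subtypeUnivEquiv fun f => linearIndependent_empty_type)]
    simp
  | succ m ih =>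
    classical
    have e : {f : Fin (m+1) → M // LinearIndependent (ZMod 2) f} ≃
        Σ g : {g : Fin m → M // LinearIndependent (ZMod 2) g},
          {x : M // x ∉ span (ZMod 2) (range g.1)} := by
      refine ⟨fun f => ⟨⟨Fin.init f.1, (linearIndependent_fin_succ'.mp f.2).1⟩,
        f.1 (Fin.last m), (linearIndependent_fin_succ'.mp f.2).2⟩,
        fun gx => ⟨Fin.snoc gx.1.1 gx.2.1, linearIndependent_fin_snoc.mpr ⟨gx.1.2, gx.2.2⟩⟩,
        ?_, ?_⟩
      · intro f
        apply Subtype.ext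
        exact Fin.snoc_init_self f.1
      · rintro ⟨⟨g, hg⟩, ⟨x, hx⟩⟩
        refine Sigma.ext (Subtype.ext ?_) ?_
        · simp
        rw [Subtype.heq_iff_coe_eq]
        · simp
        · intro y
          simp only [Fin.init_snoc]
    haveI : Fintype {g : Fin m → M // LinearIndependent (ZMod 2) g} := Fintype.ofFinite _
    haveI : Fintype M := Fintype.ofFinite M
    rw [Nat.card_congr e, Nat.card_eq_fintype_card, Fintype.card_sigma]
    have hterm : ∀ g : {g : Fin m → M // LinearIndependent (ZMod 2) g},
        Fintype.card {x : M // x ∉ span (ZMod 2) (range g.1)} =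
          2 ^ finrank (ZMod 2) M - 2 ^ m := by
      intro g
      rw [Fintype.card_subtype_compl]
      have h1 : Fintype.card {x : M // x ∈ span (ZMod 2) (range g.1)} =
          Nat.card (span (ZMod 2) (range g.1)) := (Nat.card_eq_fintype_card).symm
      rw [h1, card_module (M := span (ZMod 2) (range g.1)),
        finrank_span_eq_card g.2, Fintype.card_fin]
      rw [← card_module (M := M), Nat.card_eq_fintype_card]
    simp only [hterm, Finset.sum_const, Finset.card_univ, smul_eq_mul]
    rw [← Nat.card_eq_fintype_card, ih, Finset.prod_range_succ]

lemma card_subspaces_mul (m : ℕ) :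
    Nat.card {W : Submodule (ZMod 2) M // finrank (ZMod 2) W = m} *
      ∏ i ∈ Finset.range m, (2 ^ m - 2 ^ i) =
    Nat.card {f : Fin m → M // LinearIndependent (ZMod 2) f} := by
  classical
  haveI : Finite M := Module.finite_of_finite (ZMod 2)
  haveI : Finite (Submodule (ZMod 2) M) :=
    Finite.of_injective (fun W => (W : Set M)) SetLike.coe_injective
  haveI : Fintype {W : Submodule (ZMod 2) M // finrank (ZMod 2) W = m} := Fintype.ofFinite _
  set φ : {f : Fin m → M // LinearIndependent (ZMod 2) f} →
      {W : Submodule (ZMod 2) M // finrank (ZMod 2) W = m} :=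
    fun f => ⟨span (ZMod 2) (range f.1), by
      rw [finrank_span_eq_card f.2, Fintype.card_fin]⟩ with hφ
  have e := Equiv.sigmaFiberEquiv φ
  haveI : Fintype {f : Fin m → M // LinearIndependent (ZMod 2) f} := Fintype.ofFinite _
  have hsig : Nat.card {f : Fin m → M // LinearIndependent (ZMod 2) f} =
      ∑ W, Fintype.card {f // φ f = W} := by
    rw [← Nat.card_congr e]
    simp only [Nat.card_eq_fintype_card, Fintype.card_sigma]
  rw [hsig]
  have hfib : ∀ W : {W : Submodule (ZMod 2) M // finrank (ZMod 2) W = m},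
      Fintype.card {f // φ f = W} = ∏ i ∈ Finset.range m, (2 ^ m - 2 ^ i) := by
    intro W
    have efib : {f // φ f = W} ≃ {g : Fin m → W.1 // LinearIndependent (ZMod 2) g} := by
      refine ⟨fun f => ⟨fun i => ⟨f.1.1 i, ?_⟩, ?_⟩, fun g => ⟨⟨fun i => (g.1 i : M), ?_⟩, ?_⟩,
        ?_, ?_⟩
      · have : f.1.1 i ∈ span (ZMod 2) (range f.1.1) := subset_span (mem_range_self i)
        have hs : span (ZMod 2) (range f.1.1) = W.1 := congrArg Subtype.val f.2
        rwa [hs] at this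
      · apply LinearIndependent.of_comp W.1.subtype
        convert f.1.2
        rfl
      · exact g.2.map' W.1.subtype (ker_subtype _)
      · apply Subtype.ext
        show span (ZMod 2) (range fun i => (g.1 i : M)) = W.1
        have : (range fun i => (g.1 i : M)) = W.1.subtype '' (range g.1) := by
          rw [← range_comp]; rfl
        rw [this, Submodule.span_image,
          g.2.span_eq_top_of_card_eq_finrank' (by rw [Fintype.card_fin, W.2]),
          Submodule.map_top, range_subtype]
      · intro f
        apply Subtype.ext
        apply Subtype.ext
        rfl
      · intro g
        apply Subtype.ext
        funext i
        apply Subtype.ext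
        rfl
    rw [← Nat.card_eq_fintype_card, Nat.card_congr efib,
      card_linIndep (M := W.1) m, W.2]
  simp only [hfib, Finset.sum_const, Finset.card_univ, smul_eq_mul]
  rw [Nat.card_eq_fintype_card]

lemma card_subspaces (m : ℕ) (hm : m ≤ finrank (ZMod 2) M) :
    (Nat.card {W : Submodule (ZMod 2) M // finrank (ZMod 2) W = m} : ℚ) =
      ∏ i ∈ Finset.range m,
        ((2 : ℚ) ^ (finrank (ZMod 2) M - i) - 1) / ((2 : ℚ) ^ (m - i) - 1) := by
  have key := card_subspaces_mul (M := M) m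
  rw [card_linIndep] at key
  have hB : ∀ i ∈ Finset.range m, ((2:ℕ) ^ m - 2 ^ i : ℕ) ≠ 0 := by
    intro i hi
    have : (2:ℕ) ^ i < 2 ^ m := Nat.pow_lt_pow_right one_lt_two (Finset.mem_range.mp hi)
    omega
  have hBQ : (∏ i ∈ Finset.range m, ((2:ℕ) ^ m - 2 ^ i) : ℕ) ≠ 0 :=
    Finset.prod_ne_zero_iff.mpr hB
  have hq : (Nat.card {W : Submodule (ZMod 2) M // finrank (ZMod 2) W = m} : ℚ) =
      (∏ i ∈ Finset.range m, ((2:ℕ) ^ finrank (ZMod 2) M - 2 ^ i) : ℕ) /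
        (∏ i ∈ Finset.range m, ((2:ℕ) ^ m - 2 ^ i) : ℕ) := by
    rw [eq_div_iff (by exact_mod_cast hBQ)]
    exact_mod_cast congrArg (Nat.cast : ℕ → ℚ) key
  have hA : ((∏ i ∈ Finset.range m, ((2:ℕ) ^ finrank (ZMod 2) M - 2 ^ i) : ℕ) : ℚ) =
      ∏ i ∈ Finset.range m, ((2:ℚ) ^ finrank (ZMod 2) M - 2 ^ i) := by
    rw [Nat.cast_prod]
    refine Finset.prod_congr rfl fun i hi => ?_
    have h1 : (2:ℕ) ^ i ≤ 2 ^ finrank (ZMod 2) M :=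
      Nat.pow_le_pow_right (by norm_num) ((Finset.mem_range.mp hi).le.trans hm)
    push_cast [Nat.cast_sub h1]
    ring
  have hB2 : ((∏ i ∈ Finset.range m, ((2:ℕ) ^ m - 2 ^ i) : ℕ) : ℚ) =
      ∏ i ∈ Finset.range m, ((2:ℚ) ^ m - 2 ^ i) := by
    rw [Nat.cast_prod]
    refine Finset.prod_congr rfl fun i hi => ?_
    have h1 : (2:ℕ) ^ i ≤ 2 ^ m :=
      Nat.pow_le_pow_right (by norm_num) (Finset.mem_range.mp hi).le
    push_cast [Nat.cast_sub h1]
    ring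
  rw [hq, hA, hB2, ← Finset.prod_div_distrib]
  refine Finset.prod_congr rfl fun i hi => ?_
  have hi' : i ≤ m := (Finset.mem_range.mp hi).le
  have hd : (2:ℚ) ^ finrank (ZMod 2) M = 2 ^ i * 2 ^ (finrank (ZMod 2) M - i) := by
    rw [← pow_add]
    congr 1
    omega
  have hmm : (2:ℚ) ^ m = 2 ^ i * 2 ^ (m - i) := by
    rw [← pow_add]
    congr 1
    omega
  rw [hd, hmm,
    show (2:ℚ) ^ i * 2 ^ (finrank (ZMod 2) M - i) - 2 ^ i
      = 2 ^ i * (2 ^ (finrank (ZMod 2) M - i) - 1) by ring,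
    show (2:ℚ) ^ i * 2 ^ (m - i) - 2 ^ i = 2 ^ i * (2 ^ (m - i) - 1) by ring,
    mul_div_mul_left _ _ (pow_ne_zero i (two_ne_zero))]

end Stmt10Aux

open Module Submodule

theorem stmt10 (n k j : ℕ) (hj : 0 < j) (hjk : j ≤ k) (hkn : k ≤ n)
    (V : Submodule (ZMod 2) (Fin n → ZMod 2))
    (hV : Module.finrank (ZMod 2) V = j) :
    (Nat.card {W : Submodule (ZMod 2) (Fin n → ZMod 2) //
        Module.finrank (ZMod 2) W = k ∧ V ≤ W} : ℚ) =
      ∏ i ∈ Finset.range (k - j),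
        ((2 : ℚ) ^ (n - j - i) - 1) / ((2 : ℚ) ^ (k - j - i) - 1) := by
  classical
  have hQ : finrank (ZMod 2) ((Fin n → ZMod 2) ⧸ V) = n - j := by
    have h1 := Submodule.finrank_quotient_add_finrank V
    rw [hV, Module.finrank_fin_fun] at h1
    omega
  have key : ∀ U : Submodule (ZMod 2) ((Fin n → ZMod 2) ⧸ V),
      finrank (ZMod 2) (U.comap V.mkQ) = finrank (ZMod 2) U + j := by
    intro U
    set W := U.comap V.mkQ with hW
    have hVW : V ≤ W := Submodule.le_comap_mkQ V U
    set g : W →ₗ[ZMod 2] (Fin n → ZMod 2) ⧸ V := V.mkQ ∘ₗ W.subtype with hg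
    have hrange : LinearMap.range g = U := by
      rw [hg, LinearMap.range_comp, Submodule.range_subtype, hW]
      exact Submodule.map_comap_eq_self (by rw [Submodule.range_mkQ]; exact le_top)
    have hker : LinearMap.ker g = V.comap W.subtype := by
      rw [hg, LinearMap.ker_comp, Submodule.ker_mkQ]
    have h1 := LinearMap.finrank_range_add_finrank_ker g
    rw [hrange, hker] at h1
    have h2 : finrank (ZMod 2) (V.comap W.subtype) = j := by
      rw [← hV]
      exact (Submodule.comapSubtypeEquivOfLe hVW).finrank_eq
    rw [h2] at h1
    exact h1.symm
  have eqv : {U : Submodule (ZMod 2) ((Fin n → ZMod 2) ⧸ V) //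
        finrank (ZMod 2) U = k - j} ≃
      {W : Submodule (ZMod 2) (Fin n → ZMod 2) //
        Module.finrank (ZMod 2) W = k ∧ V ≤ W} := by
    refine ⟨fun U => ⟨U.1.comap V.mkQ, ?_, Submodule.le_comap_mkQ V U.1⟩,
      fun W => ⟨W.1.map V.mkQ, ?_⟩, ?_, ?_⟩
    · rw [key U.1, U.2]
      omega
    · have hc : (W.1.map V.mkQ).comap V.mkQ = W.1 := by
        rw [Submodule.comap_map_mkQ, sup_eq_right.mpr W.2.2]
      have h3 := key (W.1.map V.mkQ)
      rw [hc, W.2.1] at h3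
      omega
    · intro U
      apply Subtype.ext
      exact Submodule.map_comap_eq_self (by rw [Submodule.range_mkQ]; exact le_top)
    · intro W
      apply Subtype.ext
      show (W.1.map V.mkQ).comap V.mkQ = W.1
      rw [Submodule.comap_map_mkQ, sup_eq_right.mpr W.2.2]
  rw [← Nat.card_congr eqv,
    Stmt10Aux.card_subspaces (M := (Fin n → ZMod 2) ⧸ V) (k - j) (by rw [hQ]; omega), hQ]
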